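/- Let G1 be a torsion group, G2 a group, and φ : G1 → G2 a bijection such that a multiset over G1 is a product-one sequence over G1 if and only if its termwise image under φ is a product-one sequence over G2. Then for every g in G1, the order of φ(g) equals the order of g; in particular, G2 is a torsion group and φ maps the identity of G1 to the identity of G2. -/
import Mathlib


/-- A multiset `S` over a group `G` is a *product-one sequence* if its terms can be
ordered so that their product is `1`. -/
def IsProductOne {G : Type*} [Group G] (S : Multiset G) : Prop :=
  ∃ l : List G, (l : Multiset G) = S ∧ l.prod = 1

/-- The monoid `B(G)` of product-one sequences over `G`, as a submonoid of the free
abelian monoid (finite multisets under addition) over `G`. -/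
def ProductOneSubmonoid (G : Type*) [Group G] : AddSubmonoid (Multiset G) where
  carrier := {S | IsProductOne S}
  zero_mem' := ⟨[], rfl, rfl⟩
  add_mem' := by
    rintro a b ⟨l1, rfl, p1⟩ ⟨l2, rfl, p2⟩
    exact ⟨l1 ++ l2, by simp, by simp [p1, p2]⟩

lemma isProductOne_replicate {G : Type*} [Group G] (n : ℕ) (g : G) :
    IsProductOne (Multiset.replicate n g) ↔ g ^ n = 1 := by
  constructor
  · rintro ⟨l, hl, hp⟩
    have : l = List.replicate n g := by
      rw [List.eq_replicate_iff]
      constructor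
      · have := congrArg Multiset.card hl
        simpa using this
      · intro b hb
        have hb' : b ∈ Multiset.replicate n g := hl ▸ (by exact_mod_cast hb)
        exact Multiset.eq_of_mem_replicate hb'
    rw [this, List.prod_replicate] at hp
    exact hp
  · intro hg
    exact ⟨List.replicate n g, by simp [Multiset.coe_replicate], by simp [hg]⟩

theorem A1 (G1 G2 : Type*) [Group G1] [Group G2]
    (htor : ∀ g : G1, IsOfFinOrder g) (φ : G1 → G2) (hbij : Function.Bijective φ)
    (h : ∀ S : Multiset G1, IsProductOne S ↔ IsProductOne (S.map φ)) :
    (∀ g : G1, orderOf (φ g) = orderOf g) ∧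
      (∀ g2 : G2, IsOfFinOrder g2) ∧ φ 1 = 1 := by
  have key : ∀ (g : G1) (n : ℕ), g ^ n = 1 ↔ (φ g) ^ n = 1 := by
    intro g n
    have := h (Multiset.replicate n g)
    rw [Multiset.map_replicate] at this
    rw [← isProductOne_replicate n g, ← isProductOne_replicate n (φ g)]
    exact this
  have hord : ∀ g : G1, orderOf (φ g) = orderOf g := by
    intro g
    apply Nat.dvd_antisymm
    · rw [orderOf_dvd_iff_pow_eq_one, ← key]
      exact pow_orderOf_eq_one g
    · rw [orderOf_dvd_iff_pow_eq_one, key]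
      exact pow_orderOf_eq_one (φ g)
  refine ⟨hord, ?_, ?_⟩
  · intro g2
    obtain ⟨g, rfl⟩ := hbij.2 g2
    rw [← orderOf_pos_iff, hord]
    exact (htor g).orderOf_pos
  · rw [← orderOf_eq_one_iff, hord, orderOf_eq_one_iff]
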